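/- Let A be an m×n real matrix with 0 ≤ A_{ij} ≤ 1 for all i,j, and let the value V of the matrix game with payoff matrix A satisfy 0 < V < 1. Then the optimal value of P = max{1ᵀx : Ax ≤ 1, x ≥ 0} equals 1/V, the optimal value of Q = min{1ᵀy : (1 − A)y ≥ 1, y ≥ 0} equals 1/(1−V), and hence 1/Opt(P) + 1/Opt(Q) = 1. -/

import Mathlib

open Matrix

lemma exists_column {m n : ℕ} [NeZero m] [NeZero n] (A : Matrix (Fin m) (Fin n) ℝ) (V : ℝ)
    (hub : ∀ r : Fin m → ℝ, (∀ i, 0 ≤ r i) → ∑ i, r i = 1 → (⨅ j, Aᵀ.mulVec r j) ≤ V) :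
    ∃ c : Fin n → ℝ, (∀ j, 0 ≤ c j) ∧ ∑ j, c j = 1 ∧ ∀ i, A.mulVec c i ≤ V := by
  by_contra hcon
  push_neg at hcon
  set K : Set (Fin m → ℝ) := A.mulVecLin '' stdSimplex ℝ (Fin n) with hK
  set S : Set (Fin m → ℝ) := {z | ∀ i, z i ≤ V} with hSdef
  have hKconv : Convex ℝ K := (convex_stdSimplex ℝ (Fin n)).linear_image A.mulVecLin
  have hKcomp : IsCompact K :=
    (isCompact_stdSimplex ℝ (Fin n)).image A.mulVecLin.continuous_of_finiteDimensional
  have hSconv : Convex ℝ S := by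
    have : S = ⋂ i, {z : Fin m → ℝ | z i ≤ V} := by ext z; simp [hSdef, Set.mem_iInter]
    rw [this]
    exact convex_iInter fun i =>
      convex_halfSpace_le (LinearMap.proj i : (Fin m → ℝ) →ₗ[ℝ] ℝ).isLinear V
  have hSclosed : IsClosed S := by
    have : S = ⋂ i, {z : Fin m → ℝ | z i ≤ V} := by ext z; simp [hSdef, Set.mem_iInter]
    rw [this]
    exact isClosed_iInter fun i => isClosed_le (continuous_apply i) continuous_const
  have hdisj : Disjoint S K := by
    rw [Set.disjoint_right]
    rintro z ⟨c, ⟨hc0, hc1⟩, rfl⟩ hzS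
    obtain ⟨i, hi⟩ := hcon c hc0 hc1
    exact absurd (hzS i) (not_le.mpr hi)
  obtain ⟨f, u, v, hfS, huv, hfK⟩ :=
    geometric_hahn_banach_closed_compact hSconv hSclosed hKconv hKcomp hdisj
  set p : Fin m → ℝ := fun i => f (Pi.single i 1) with hp
  have hrep : ∀ z : Fin m → ℝ, f z = ∑ i, z i * p i := by
    intro z
    have hz : z = ∑ i, (z i) • (Pi.single i 1 : Fin m → ℝ) := by
      funext k
      simp [Finset.sum_apply, Pi.single_apply, mul_comm]
    calc f z = f (∑ i, (z i) • (Pi.single i 1 : Fin m → ℝ)) := by rw [← hz]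
      _ = ∑ i, z i * p i := by rw [map_sum]; simp [hp]
  have hVS : (fun _ : Fin m => V) ∈ S := fun i => le_refl V
  have hfV : f (fun _ => V) < u := hfS _ hVS
  have hp0 : ∀ i, 0 ≤ p i := by
    intro i
    by_contra hneg
    push_neg at hneg
    set t : ℝ := max 0 ((u - f (fun _ => V)) / (-p i)) with ht
    have ht0 : 0 ≤ t := le_max_left _ _
    have hmem : ((fun _ => V) - t • (Pi.single i 1 : Fin m → ℝ)) ∈ S := by
      intro k
      simp only [Pi.sub_apply, Pi.smul_apply, Pi.single_apply, smul_eq_mul]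
      rcases eq_or_ne k i with rfl | hk
      · simp; nlinarith
      · simp [hk]
    have hvaleq : f ((fun _ => V) - t • (Pi.single i 1 : Fin m → ℝ))
        = f (fun _ => V) - t * p i := by
      rw [map_sub, f.map_smul]; simp [hp]
    have hlt := hfS _ hmem
    rw [hvaleq] at hlt
    have htge : (u - f (fun _ => V)) / (-p i) ≤ t := le_max_right _ _
    rw [div_le_iff₀ (by linarith : (0:ℝ) < -p i)] at htge
    nlinarith
  set σ : ℝ := ∑ i, p i with hσ
  have hcolval : ∀ j : Fin n, v < ∑ i, A i j * p i := by
    intro j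
    have hmemK : A.mulVecLin (Pi.single j 1) ∈ K := ⟨_, single_mem_stdSimplex ℝ j, rfl⟩
    calc v < f (A.mulVecLin (Pi.single j 1)) := hfK _ hmemK
      _ = ∑ i, A i j * p i := by
        rw [hrep]
        exact Finset.sum_congr rfl fun i _ => by
          simp [Matrix.mulVecLin_apply, Matrix.mulVec_single]
  -- f (V 1) = V * σ
  have hfVσ : f (fun _ => V) = V * σ := by
    rw [hrep, hσ, Finset.mul_sum]
  have hσ0 : 0 < σ := by
    rcases lt_or_eq_of_le (Finset.sum_nonneg fun i _ => hp0 i) with h | h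
    · exact h
    · -- σ = 0 forces all p i = 0, contradiction
      exfalso
      have hall : ∀ i ∈ Finset.univ, p i = 0 :=
        (Finset.sum_eq_zero_iff_of_nonneg fun i _ => hp0 i).mp h.symm
      obtain ⟨j⟩ := (inferInstance : Nonempty (Fin n))
      have h1 := hcolval j
      have h2 : ∑ i, A i j * p i = 0 :=
        Finset.sum_eq_zero fun i hi => by rw [hall i hi, mul_zero]
      rw [h2] at h1
      have hσz : σ = 0 := by rw [hσ, ← h]
      have hfV' : V * σ < u := hfVσ ▸ hfV
      rw [hσz, mul_zero] at hfV'
      linarith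
  -- build the contradicting row strategy
  set r : Fin m → ℝ := fun i => p i / σ with hr
  have hr0 : ∀ i, 0 ≤ r i := fun i => div_nonneg (hp0 i) hσ0.le
  have hr1 : ∑ i, r i = 1 := by
    rw [hr]; rw [← Finset.sum_div]; exact div_self hσ0.ne'
  have hkey : ∀ j, v / σ ≤ Aᵀ.mulVec r j := by
    intro j
    have : Aᵀ.mulVec r j = (∑ i, A i j * p i) / σ := by
      simp only [Matrix.mulVec, dotProduct, Matrix.transpose_apply, hr, div_eq_mul_inv,
        Finset.sum_mul]
      exact Finset.sum_congr rfl fun i _ => by ring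
    rw [this]
    exact div_le_div_of_nonneg_right (hcolval j).le hσ0.le
  have hVlt : V < v / σ := by
    have hfV' : V * σ < u := hfVσ ▸ hfV
    rw [lt_div_iff₀ hσ0]
    linarith
  have hwmem := hub r hr0 hr1
  have hwge : v / σ ≤ ⨅ j, Aᵀ.mulVec r j := le_ciInf hkey
  linarith



/-- Game-theoretic interpretation of LP complementation: if the matrix game with payoff
matrix `A` (entries in `[0,1]`) has value `V` with `0 < V < 1`, then
`P = max {1ᵀx : Ax ≤ 1, x ≥ 0}` has optimal value `1/V`,
`Q = min {1ᵀy : (1 - A)y ≥ 1, y ≥ 0}` has optimal value `1/(1 - V)`, and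
`1/Opt(P) + 1/Opt(Q) = 1`. -/
theorem stmt4 {m n : ℕ} (hm : 0 < m) (hn : 0 < n) (A : Matrix (Fin m) (Fin n) ℝ)
    (hA : ∀ i j, 0 ≤ A i j ∧ A i j ≤ 1) (V : ℝ) (hV0 : 0 < V) (hV1 : V < 1)
    (hval : IsGreatest {w : ℝ | ∃ r : Fin m → ℝ, 0 ≤ r ∧ ∑ i, r i = 1 ∧
        w = ⨅ j : Fin n, Aᵀ.mulVec r j} V) :
    IsGreatest {v : ℝ | ∃ x : Fin n → ℝ,
        A.mulVec x ≤ (fun _ => 1) ∧ 0 ≤ x ∧ v = ∑ j, x j} (1 / V) ∧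
    IsLeast {v : ℝ | ∃ y : Fin n → ℝ,
        ((fun _ => 1) : Fin m → ℝ) ≤ (Matrix.of fun i j => 1 - A i j).mulVec y ∧
          0 ≤ y ∧ v = ∑ j, y j} (1 / (1 - V)) ∧
    1 / (1 / V) + 1 / (1 / (1 - V)) = 1 := by
  haveI : NeZero m := ⟨hm.ne'⟩
  haveI : NeZero n := ⟨hn.ne'⟩
  have h1V : (0:ℝ) < 1 - V := by linarith
  obtain ⟨⟨r₀, hr₀0, hr₀1, hr₀V⟩, hub⟩ := hval
  have hAT : ∀ (r : Fin m → ℝ) (j : Fin n), Aᵀ.mulVec r j = ∑ i, A i j * r i := fun r j => by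
    simp [Matrix.mulVec, dotProduct, Matrix.transpose_apply]
  have hAv : ∀ (x : Fin n → ℝ) (i : Fin m), A.mulVec x i = ∑ j, A i j * x j := fun x i => by
    simp [Matrix.mulVec, dotProduct]
  have hBv : ∀ (y : Fin n → ℝ) (i : Fin m),
      (Matrix.of fun i j => 1 - A i j).mulVec y i = ∑ j, (1 - A i j) * y j := fun y i => by
    simp [Matrix.mulVec, dotProduct]
  have hr₀ : ∀ j, V ≤ Aᵀ.mulVec r₀ j := fun j => by
    rw [hr₀V]; exact ciInf_le (Finite.bddBelow_range _) j
  have hub' : ∀ r : Fin m → ℝ, (∀ i, 0 ≤ r i) → ∑ i, r i = 1 →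
      (⨅ j, Aᵀ.mulVec r j) ≤ V := fun r h0 h1 => hub ⟨r, fun i => h0 i, h1, rfl⟩
  obtain ⟨c, hc0, hc1, hcV⟩ := exists_column A V hub'
  refine ⟨⟨⟨V⁻¹ • c, ?_, ?_, ?_⟩, ?_⟩, ⟨⟨(1 - V)⁻¹ • c, ?_, ?_, ?_⟩, ?_⟩, ?_⟩
  · -- A (V⁻¹ c) ≤ 1
    intro i
    rw [Matrix.mulVec_smul]
    simp only [Pi.smul_apply, smul_eq_mul]
    calc V⁻¹ * A.mulVec c i ≤ V⁻¹ * V :=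
          mul_le_mul_of_nonneg_left (hcV i) (inv_nonneg.mpr hV0.le)
      _ = 1 := inv_mul_cancel₀ hV0.ne'
  · intro j; exact mul_nonneg (inv_nonneg.mpr hV0.le) (hc0 j)
  · simp only [Pi.smul_apply, smul_eq_mul, ← Finset.mul_sum, hc1, mul_one, one_div]
  · -- upper bound for P
    rintro w ⟨x, hxA, hx0, rfl⟩
    have key : V * ∑ j, x j ≤ 1 := by
      calc V * ∑ j, x j = ∑ j, V * x j := Finset.mul_sum _ _ _
        _ ≤ ∑ j, Aᵀ.mulVec r₀ j * x j :=
            Finset.sum_le_sum fun j _ => mul_le_mul_of_nonneg_right (hr₀ j) (hx0 j)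
        _ = ∑ i, r₀ i * A.mulVec x i := by
            simp only [hAT, hAv, Finset.sum_mul, Finset.mul_sum]
            rw [Finset.sum_comm]
            exact Finset.sum_congr rfl fun i _ => Finset.sum_congr rfl fun j _ => by ring
        _ ≤ ∑ i, r₀ i * 1 :=
            Finset.sum_le_sum fun i _ => mul_le_mul_of_nonneg_left (hxA i) (hr₀0 i)
        _ = 1 := by simp [hr₀1]
    rw [le_div_iff₀ hV0]
    linarith [key, mul_comm V (∑ j, x j)]
  · -- feasibility for Q
    intro i
    rw [Matrix.mulVec_smul]
    simp only [Pi.smul_apply, smul_eq_mul]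
    have hBc : (Matrix.of fun i j => 1 - A i j).mulVec c i = 1 - A.mulVec c i := by
      rw [hBv, hAv]
      rw [show ∑ j, (1 - A i j) * c j = ∑ j, (c j - A i j * c j) from
        Finset.sum_congr rfl fun j _ => by ring, Finset.sum_sub_distrib, hc1]
    rw [hBc]
    have h2 : 1 - V ≤ 1 - A.mulVec c i := by linarith [hcV i]
    calc (1:ℝ) = (1 - V)⁻¹ * (1 - V) := (inv_mul_cancel₀ h1V.ne').symm
      _ ≤ (1 - V)⁻¹ * (1 - A.mulVec c i) :=
          mul_le_mul_of_nonneg_left h2 (inv_nonneg.mpr h1V.le)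
  · intro j; exact mul_nonneg (inv_nonneg.mpr h1V.le) (hc0 j)
  · simp only [Pi.smul_apply, smul_eq_mul, ← Finset.mul_sum, hc1, mul_one, one_div]
  · -- lower bound for Q
    rintro w ⟨y, hyB, hy0, rfl⟩
    have key : 1 ≤ (1 - V) * ∑ j, y j := by
      calc (1:ℝ) = ∑ i, r₀ i * 1 := by simp [hr₀1]
        _ ≤ ∑ i, r₀ i * (Matrix.of fun i j => 1 - A i j).mulVec y i :=
            Finset.sum_le_sum fun i _ => mul_le_mul_of_nonneg_left (hyB i) (hr₀0 i)
        _ = ∑ j, (1 - Aᵀ.mulVec r₀ j) * y j := by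
            simp only [hBv, hAT, Finset.mul_sum]
            rw [Finset.sum_comm]
            refine Finset.sum_congr rfl fun j _ => ?_
            have hstep : ∑ i, r₀ i * ((1 - A i j) * y j)
                = (∑ i, r₀ i) * y j - (∑ i, A i j * r₀ i) * y j := by
              rw [Finset.sum_mul, Finset.sum_mul, ← Finset.sum_sub_distrib]
              exact Finset.sum_congr rfl fun i _ => by ring
            rw [hstep, hr₀1]; ring
        _ ≤ ∑ j, (1 - V) * y j :=
            Finset.sum_le_sum fun j _ =>
              mul_le_mul_of_nonneg_right (by linarith [hr₀ j]) (hy0 j)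
        _ = (1 - V) * ∑ j, y j := (Finset.mul_sum _ _ _).symm
    rw [div_le_iff₀ h1V]
    linarith [key, mul_comm (1 - V) (∑ j, y j)]
  · rw [one_div_one_div, one_div_one_div]; ring
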